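/- Define F(t,r) = (1 + r cos t)/(r² + 4r cos t + 4)^{3/2} + (1 − r cos t)/(r² − 4r cos t + 4)^{3/2}. For every r ∈ (0,2): F(t,r) ≥ 0 for all t ∈ ℝ if and only if r ≤ (√17 − 3)^{1/2}. -/
import Mathlib


/-- The coefficient of the linearization of the curved Sitnikov problem (with
circular primaries, `ε = 0`, `R = 1`) at the equilibrium `q = π`. -/
noncomputable def F (t r : ℝ) : ℝ :=
  (1 + r * Real.cos t) / (r ^ 2 + 4 * r * Real.cos t + 4) ^ ((3 : ℝ) / 2) +
    (1 - r * Real.cos t) / (r ^ 2 - 4 * r * Real.cos t + 4) ^ ((3 : ℝ) / 2)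

private lemma key_poly (s x : ℝ) (hx : 1 < x) (hxs : x^2 ≤ s) (hs : s^2 + 6*s ≤ 8) :
    (x-1)^2 * (s+4*x+4)^3 ≤ (x+1)^2 * (s-4*x+4)^3 := by
  have hs1 : 1 < s := by nlinarith
  set hv : ℝ := (s+4)^3 - 6*(s+4)^2*(1+x^2) + 48*(s+4)*x^2 - 32*x^2 - 32*x^4 with hhv
  have t1 : 0 ≤ (s - x^2) * s^3 := mul_nonneg (by linarith) (by positivity)
  have t2 : 0 ≤ (x^2 - 1) * ((8 - s^2 - 6*s) * (5*s - 4)) := by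
    apply mul_nonneg (by nlinarith) (mul_nonneg (by linarith) (by linarith))
  have t3 : 0 ≤ 32 * (s-1) * ((x^2-1) * (s - x^2)) := by
    apply mul_nonneg (by linarith) (mul_nonneg (by nlinarith) (by linarith))
  have hid : (s-1) * hv = (s - x^2) * s^3 + (x^2 - 1) * ((8 - s^2 - 6*s) * (5*s - 4))
      + 32 * (s-1) * ((x^2-1) * (s - x^2)) := by rw [hhv]; ring
  have hvpos : 0 ≤ hv := by nlinarith
  nlinarith [mul_nonneg (by linarith : (0:ℝ) ≤ x) hvpos]

private lemma rpow32_sq (A : ℝ) (hA : 0 ≤ A) : (A ^ ((3:ℝ)/2))^2 = A^3 := by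
  rw [← Real.rpow_natCast (A ^ ((3:ℝ)/2)) 2, ← Real.rpow_mul hA,
    show ((3:ℝ)/2) * ((2:ℕ):ℝ) = ((3:ℕ):ℝ) by norm_num, Real.rpow_natCast]

private lemma sq_rpow32 (a : ℝ) (ha : 0 ≤ a) : ((a^2 : ℝ)) ^ ((3:ℝ)/2) = a^3 := by
  rw [← Real.rpow_natCast a 2, ← Real.rpow_mul ha,
    show ((2:ℕ):ℝ) * ((3:ℝ)/2) = ((3:ℕ):ℝ) by norm_num, Real.rpow_natCast]

private lemma sum_nonneg_aux (r x : ℝ) (hr2 : r < 2) (hx0 : 0 ≤ x) (hxr : x ≤ r)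
    (hcond : r^2 + 3 ≤ Real.sqrt 17) :
    0 ≤ (1+x) * (r^2 - 4*x + 4) ^ ((3:ℝ)/2) + (1-x) * (r^2 + 4*x + 4) ^ ((3:ℝ)/2) := by
  have hB : 0 < r^2 - 4*x + 4 := by
    have : 0 < (2-r)*(2-r) := mul_pos (by linarith) (by linarith)
    nlinarith
  have hA : 0 < r^2 + 4*x + 4 := by positivity
  have hs8 : (r^2)^2 + 6*r^2 ≤ 8 := by
    nlinarith [Real.sq_sqrt (by norm_num : (0:ℝ) ≤ 17), sq_nonneg r, Real.sqrt_nonneg 17]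
  rcases le_or_gt x 1 with hx1 | hx1
  · exact add_nonneg (mul_nonneg (by linarith) (Real.rpow_nonneg hB.le _))
      (mul_nonneg (by linarith) (Real.rpow_nonneg hA.le _))
  · have hx2 : x^2 ≤ r^2 := by nlinarith
    have key : (x-1)^2 * (r^2+4*x+4)^3 ≤ (x+1)^2 * (r^2-4*x+4)^3 :=
      key_poly (r^2) x hx1 hx2 hs8
    have hAs : 0 ≤ (x-1) * (r^2 + 4*x + 4) ^ ((3:ℝ)/2) :=
      mul_nonneg (by linarith) (Real.rpow_nonneg hA.le _)
    have hBs : 0 ≤ (1+x) * (r^2 - 4*x + 4) ^ ((3:ℝ)/2) :=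
      mul_nonneg (by linarith) (Real.rpow_nonneg hB.le _)
    have hsq : ((x-1) * (r^2 + 4*x + 4) ^ ((3:ℝ)/2))^2
        ≤ ((1+x) * (r^2 - 4*x + 4) ^ ((3:ℝ)/2))^2 := by
      rw [mul_pow, mul_pow, rpow32_sq _ hA.le, rpow32_sq _ hB.le]
      nlinarith [key]
    have := (pow_le_pow_iff_left₀ hAs hBs two_ne_zero).mp hsq
    linarith

/-- for `r ∈ (0,2)`, `F(t,r) ≥ 0` for all `t` iff `r ≤ (√17 - 3)^{1/2}`. -/
theorem F_nonneg_iff (r : ℝ) (hr : r ∈ Set.Ioo (0 : ℝ) 2) :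
    (∀ t : ℝ, 0 ≤ F t r) ↔ r ≤ Real.sqrt (Real.sqrt 17 - 3) := by
  obtain ⟨hr0, hr2⟩ := hr
  constructor
  · intro h
    have h0 := h 0
    simp only [F, Real.cos_zero, mul_one] at h0
    rw [show r^2 + 4*r + 4 = (r+2)^2 by ring, show r^2 - 4*r + 4 = (2-r)^2 by ring,
      sq_rpow32 (r+2) (by linarith), sq_rpow32 (2-r) (by linarith)] at h0
    have hp1 : 0 < (r+2)^3 := by positivity
    have hp2 : 0 < (2-r)^3 := pow_pos (by linarith) 3
    rw [div_add_div _ _ hp1.ne' hp2.ne'] at h0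
    have hnum : 0 ≤ (1+r) * (2-r)^3 + (1-r) * (r+2)^3 := by
      have := (le_div_iff₀ (mul_pos hp1 hp2)).mp h0
      linarith [this]
    have h8 : r^4 + 6*r^2 ≤ 8 := by nlinarith [hnum]
    have hcond : r^2 + 3 ≤ Real.sqrt 17 := by
      nlinarith [Real.sq_sqrt (by norm_num : (0:ℝ) ≤ 17), Real.sqrt_nonneg 17, sq_nonneg r]
    exact (Real.le_sqrt hr0.le (by nlinarith [sq_nonneg r])).mpr (by linarith)
  · intro hle t
    have h17 : (3:ℝ) ≤ Real.sqrt 17 := by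
      nlinarith [Real.sq_sqrt (by norm_num : (0:ℝ) ≤ 17), Real.sqrt_nonneg 17]
    have hcond : r^2 + 3 ≤ Real.sqrt 17 := by
      nlinarith [Real.sq_sqrt (by linarith : (0:ℝ) ≤ Real.sqrt 17 - 3),
        pow_le_pow_left₀ hr0.le hle 2]
    show 0 ≤ F t r
    unfold F
    set x := r * Real.cos t with hx
    rw [show (4:ℝ) * r * Real.cos t = 4 * x by rw [hx]; ring]
    have hxr : x ≤ r := by nlinarith [Real.cos_le_one t, hr0.le]
    have hxr' : -r ≤ x := by nlinarith [Real.neg_one_le_cos t, hr0.le]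
    have hB : 0 < r^2 - 4*x + 4 := by
      have : 0 < (2-r)*(2-r) := mul_pos (by linarith) (by linarith)
      nlinarith
    have hA : 0 < r^2 + 4*x + 4 := by
      have : 0 < (2-r)*(2-r) := mul_pos (by linarith) (by linarith)
      nlinarith
    have hA' : (0:ℝ) < (r^2 + 4*x + 4) ^ ((3:ℝ)/2) := Real.rpow_pos_of_pos hA _
    have hB' : (0:ℝ) < (r^2 - 4*x + 4) ^ ((3:ℝ)/2) := Real.rpow_pos_of_pos hB _
    rw [div_add_div _ _ hA'.ne' hB'.ne']
    apply div_nonneg _ (mul_nonneg hA'.le hB'.le)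
    rcases le_or_gt 0 x with hx0 | hx0
    · linarith [sum_nonneg_aux r x hr2 hx0 hxr hcond]
    · have := sum_nonneg_aux r (-x) hr2 (by linarith) (by linarith) hcond
      rw [show r^2 - 4*(-x) + 4 = r^2 + 4*x + 4 by ring,
        show r^2 + 4*(-x) + 4 = r^2 - 4*x + 4 by ring] at this
      linarith [this]
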